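/- Let T be a 3-form on V, M a module over Cl(V), γ a real number, and Φ ∈ M an element satisfying (Y ⌟ T)·Φ = −(3γ/n) Y·Φ for every Y ∈ V. Then for every X ∈ V: ∑_{j=1}^{n} T(X, e_j) · (e_j ⌟ T) · Φ = −(18 γ² / n²) X · Φ, where forms and vectors act on M through their images in Cl(V). -/

import Mathlib

noncomputable section

open scoped RealInnerProductSpace

variable {V : Type*} [NormedAddCommGroup V] [InnerProductSpace ℝ V]

/-- The quadratic form `Q(v) = -⟨v,v⟩` on a real inner product space, so that
`X·Y + Y·X = -2⟨X,Y⟩` holds in the Clifford algebra. -/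
def negInnerQuadraticForm (V : Type*) [NormedAddCommGroup V] [InnerProductSpace ℝ V] :
    QuadraticForm ℝ V :=
  - LinearMap.BilinMap.toQuadraticMap (innerₗ V : LinearMap.BilinForm ℝ V)

/-- The interior product (contraction) `X ⌟ ω` of an exterior form `ω` by a vector `X`,
using the inner product to identify `X` with a dual vector. -/
def interiorProd (X : V) (ω : ExteriorAlgebra ℝ V) : ExteriorAlgebra ℝ V :=
  CliffordAlgebra.contractLeft (Q := (0 : QuadraticForm ℝ V))
    (innerₗ V X) ω

/-- The canonical linear isomorphism from the exterior algebra to the Clifford algebra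
`Cl(V)` of `Q(v) = -⟨v,v⟩`, sending `e_{i₁} ∧ ⋯ ∧ e_{iₚ}` (for orthonormal vectors) to the
Clifford product `e_{i₁} ⋯ e_{iₚ}`. -/
def exteriorToClifford (ω : ExteriorAlgebra ℝ V) :
    CliffordAlgebra (negInnerQuadraticForm V) :=
  letI : Invertible (2 : ℝ) := invertibleOfNonzero two_ne_zero
  (CliffordAlgebra.equivExterior (negInnerQuadraticForm V)).symm ω

/-- The submodule of `p`-forms, i.e. the `p`-th exterior power inside the exterior algebra. -/
def pForms (V : Type*) [NormedAddCommGroup V] [InnerProductSpace ℝ V] (p : ℕ) :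
    Submodule ℝ (ExteriorAlgebra ℝ V) :=
  LinearMap.range (ExteriorAlgebra.ι ℝ : V →ₗ[ℝ] ExteriorAlgebra ℝ V) ^ p

/-- Evaluation `T(X,Y,Z)` of a 3-form `T` (given as an element of the exterior algebra):
the scalar part of the triple contraction `Z ⌟ (Y ⌟ (X ⌟ T))`. -/
def eval3 (T : ExteriorAlgebra ℝ V) (X Y Z : V) : ℝ :=
  ExteriorAlgebra.algebraMapInv (interiorProd Z (interiorProd Y (interiorProd X T)))

-- interior product lemmas
lemma ip_ι_mul (X m : V) (x : ExteriorAlgebra ℝ V) :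
    interiorProd X (ExteriorAlgebra.ι ℝ m * x) = ⟪X, m⟫ • x - ExteriorAlgebra.ι ℝ m * interiorProd X x := by
  simpa [interiorProd] using CliffordAlgebra.contractLeft_ι_mul (Q := (0 : QuadraticForm ℝ V))
    (d := innerₗ V X) m x

lemma ip_ι (X m : V) :
    interiorProd X (ExteriorAlgebra.ι ℝ m) = algebraMap ℝ _ ⟪X, m⟫ := by
  simpa [interiorProd] using CliffordAlgebra.contractLeft_ι (0 : QuadraticForm ℝ V)
    (d := innerₗ V X) m

lemma ip_add (X : V) (x y : ExteriorAlgebra ℝ V) :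
    interiorProd X (x + y) = interiorProd X x + interiorProd X y := map_add _ _ _

lemma ip_smul (X : V) (r : ℝ) (x : ExteriorAlgebra ℝ V) :
    interiorProd X (r • x) = r • interiorProd X x := map_smul _ _ _

lemma ip_algebraMap (X : V) (r : ℝ) :
    interiorProd X (algebraMap ℝ _ r) = 0 :=
  CliffordAlgebra.contractLeft_algebraMap (Q := (0 : QuadraticForm ℝ V)) _ r

-- exteriorToClifford lemmas
open CliffordAlgebra in
private lemma etc_eq (ω : ExteriorAlgebra ℝ V) : exteriorToClifford ω =
    letI : Invertible (2 : ℝ) := invertibleOfNonzero two_ne_zero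
    changeForm (changeForm.neg_proof
      (changeForm.associated_neg_proof (Q := negInnerQuadraticForm V))) ω := rfl

private lemma Bassoc :
    letI : Invertible (2 : ℝ) := invertibleOfNonzero two_ne_zero
    (QuadraticMap.associated (R := ℝ) (-(negInnerQuadraticForm V)))
      = (innerₗ V : LinearMap.BilinForm ℝ V) := by
  letI : Invertible (2 : ℝ) := invertibleOfNonzero two_ne_zero
  have h1 : -(negInnerQuadraticForm V)
      = LinearMap.BilinMap.toQuadraticMap (innerₗ V : LinearMap.BilinForm ℝ V) := by
    simp [negInnerQuadraticForm]
  rw [h1]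
  exact QuadraticMap.associated_left_inverse ℝ (fun x y => by
    simpa using real_inner_comm y x)

local notation "ιQ" => CliffordAlgebra.ι (negInnerQuadraticForm V)
local notation "ιE" => ExteriorAlgebra.ι ℝ (M := V)

lemma etc_ι_mul (m : V) (x : ExteriorAlgebra ℝ V) :
    exteriorToClifford (ιE m * x) = ιQ m * exteriorToClifford x
      + CliffordAlgebra.contractLeft (Q := negInnerQuadraticForm V)
          (innerₗ V m) (exteriorToClifford x) := by
  letI : Invertible (2 : ℝ) := invertibleOfNonzero two_ne_zero
  rw [etc_eq, etc_eq]
  have := CliffordAlgebra.changeForm_ι_mul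
    (CliffordAlgebra.changeForm.neg_proof
      (CliffordAlgebra.changeForm.associated_neg_proof (Q := negInnerQuadraticForm V))) m x
  rw [this]
  have hb : ((-(QuadraticMap.associated (R := ℝ) (-(negInnerQuadraticForm V)))) m)
      = -((innerₗ V : LinearMap.BilinForm ℝ V) m) := by
    rw [Bassoc]; simp
  rw [hb]
  simp [sub_eq_add_neg]

lemma etc_ι (m : V) : exteriorToClifford (ιE m) = ιQ m := by
  rw [etc_eq]
  exact CliffordAlgebra.changeForm_ι _ m

lemma etc_add (x y : ExteriorAlgebra ℝ V) :
    exteriorToClifford (x + y) = exteriorToClifford x + exteriorToClifford y := by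
  simp [etc_eq]

lemma etc_smul (r : ℝ) (x : ExteriorAlgebra ℝ V) :
    exteriorToClifford (r • x) = r • exteriorToClifford x := by
  simp [etc_eq]

lemma etc_ι_mul_ι (u v : V) :
    exteriorToClifford (ιE u * ιE v) = ιQ u * ιQ v + algebraMap ℝ _ ⟪u, v⟫ := by
  rw [etc_ι_mul, etc_ι, CliffordAlgebra.contractLeft_ι]
  simp

lemma ip_sub (X : V) (x y : ExteriorAlgebra ℝ V) :
    interiorProd X (x - y) = interiorProd X x - interiorProd X y := map_sub _ _ _

lemma amInv (r : ℝ) :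
    ExteriorAlgebra.algebraMapInv (algebraMap ℝ (ExteriorAlgebra ℝ V) r) = r :=
  ExteriorAlgebra.algebraMap_leftInverse V r

lemma iota_comm (u v : V) :
    ιQ u * ιQ v = (-(2 * ⟪u, v⟫)) • (1 : CliffordAlgebra (negInnerQuadraticForm V))
      - ιQ v * ιQ u := by
  have h := CliffordAlgebra.ι_mul_ι_add_swap (Q := negInnerQuadraticForm V) u v
  have hp : QuadraticMap.polar (⇑(negInnerQuadraticForm V)) u v = -(2 * ⟪u, v⟫) := by
    have : ∀ w : V, (negInnerQuadraticForm V) w = -⟪w, w⟫ := fun w => rfl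
    simp only [QuadraticMap.polar, this]
    rw [real_inner_add_add_self]; ring
  rw [hp] at h
  rw [eq_sub_iff_add_eq, h, Algebra.algebraMap_eq_smul_one]

-- generator computation for interior product
lemma ip_gen (a b c Y : V) :
    interiorProd Y (ιE a * ιE b * ιE c) =
      ⟪Y,a⟫ • (ιE b * ιE c) - ⟪Y,b⟫ • (ιE a * ιE c) + ⟪Y,c⟫ • (ιE a * ιE b) := by
  rw [mul_assoc, ip_ι_mul, ip_ι_mul, ip_ι]
  have : (ιE b : ExteriorAlgebra ℝ V) * algebraMap ℝ _ ⟪Y,c⟫ = ⟪Y,c⟫ • ιE b := by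
    rw [Algebra.algebraMap_eq_smul_one, mul_smul_comm, mul_one]
  rw [this]
  simp only [mul_sub, mul_smul_comm, smul_sub]
  abel

lemma eval3_gen (a b c X Y Z : V) :
    eval3 (ιE a * ιE b * ιE c) X Y Z =
      ⟪X,a⟫ * (⟪Y,b⟫ * ⟪Z,c⟫ - ⟪Y,c⟫ * ⟪Z,b⟫)
      - ⟪X,b⟫ * (⟪Y,a⟫ * ⟪Z,c⟫ - ⟪Y,c⟫ * ⟪Z,a⟫)
      + ⟪X,c⟫ * (⟪Y,a⟫ * ⟪Z,b⟫ - ⟪Y,b⟫ * ⟪Z,a⟫) := by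
  have hYbc : interiorProd Y ((ιE b : ExteriorAlgebra ℝ V) * ιE c)
      = ⟪Y,b⟫ • ιE c - ⟪Y,c⟫ • ιE b := by
    rw [ip_ι_mul, ip_ι]
    rw [Algebra.algebraMap_eq_smul_one, mul_smul_comm, mul_one]
  have hYac : interiorProd Y ((ιE a : ExteriorAlgebra ℝ V) * ιE c)
      = ⟪Y,a⟫ • ιE c - ⟪Y,c⟫ • ιE a := by
    rw [ip_ι_mul, ip_ι]
    rw [Algebra.algebraMap_eq_smul_one, mul_smul_comm, mul_one]
  have hYab : interiorProd Y ((ιE a : ExteriorAlgebra ℝ V) * ιE b)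
      = ⟪Y,a⟫ • ιE b - ⟪Y,b⟫ • ιE a := by
    rw [ip_ι_mul, ip_ι]
    rw [Algebra.algebraMap_eq_smul_one, mul_smul_comm, mul_one]
  rw [eval3, ip_gen]
  simp only [ip_add, ip_sub, ip_smul, hYbc, hYac, hYab, smul_sub, map_add, map_sub, map_smul,
    ip_ι, amInv, smul_eq_mul]
  ring

lemma etc_sub (x y : ExteriorAlgebra ℝ V) :
    exteriorToClifford (x - y) = exteriorToClifford x - exteriorToClifford y := by
  simp [etc_eq]

lemma sum_scaled_mul {n : ℕ} (e : OrthonormalBasis (Fin n) ℝ V) (s : ℝ) (u v : V) :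
    ∑ j, (s * ⟪e j, u⟫) • (ιQ v * ιQ (e j)) = s • (ιQ v * ιQ u) := by
  have h : ιQ v * ιQ u = ∑ j, ⟪e j, u⟫ • (ιQ v * ιQ (e j)) := by
    conv_lhs => rw [← e.sum_repr' u]
    rw [map_sum, Finset.mul_sum]
    simp [mul_smul_comm]
  rw [h, Finset.smul_sum]
  simp [mul_smul]

lemma key_gen {n : ℕ} (e : OrthonormalBasis (Fin n) ℝ V) (a b c X : V) :
    ∑ j, ιQ (∑ i, eval3 ((ιE a : ExteriorAlgebra ℝ V) * ιE b * ιE c) X (e j) (e i) • e i)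
        * ιQ (e j)
      = (-2 : ℝ) • exteriorToClifford (interiorProd X ((ιE a : ExteriorAlgebra ℝ V) * ιE b * ιE c)) := by
  set w : V → V := fun Y => (⟪X,a⟫*⟪Y,b⟫) • c - (⟪X,a⟫*⟪Y,c⟫) • b - (⟪X,b⟫*⟪Y,a⟫) • c
    + (⟪X,b⟫*⟪Y,c⟫) • a + (⟪X,c⟫*⟪Y,a⟫) • b - (⟪X,c⟫*⟪Y,b⟫) • a with hwdef
  have hw : ∀ Y : V, (∑ i, eval3 ((ιE a : ExteriorAlgebra ℝ V) * ιE b * ιE c) X Y (e i) • e i)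
      = w Y := by
    intro Y
    have h : ∀ i, eval3 ((ιE a : ExteriorAlgebra ℝ V) * ιE b * ιE c) X Y (e i) = ⟪e i, w Y⟫ := by
      intro i
      rw [eval3_gen, hwdef]
      simp only [inner_sub_right, inner_add_right, real_inner_smul_right]
      ring
    simp only [h]
    exact e.sum_repr' (w Y)
  simp only [hw, hwdef]
  simp only [map_sub, map_add, map_smul, sub_mul, add_mul, smul_mul_assoc,
    Finset.sum_sub_distrib, Finset.sum_add_distrib]
  rw [sum_scaled_mul e, sum_scaled_mul e, sum_scaled_mul e, sum_scaled_mul e,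
    sum_scaled_mul e, sum_scaled_mul e]
  rw [ip_gen, etc_add, etc_sub, etc_smul, etc_smul, etc_smul, etc_ι_mul_ι, etc_ι_mul_ι,
    etc_ι_mul_ι]
  rw [iota_comm c b, iota_comm c a, iota_comm b a,
    real_inner_comm c b, real_inner_comm c a, real_inner_comm b a]
  simp only [Algebra.algebraMap_eq_smul_one]
  module

lemma eval3_add (T T' : ExteriorAlgebra ℝ V) (X Y Z : V) :
    eval3 (T + T') X Y Z = eval3 T X Y Z + eval3 T' X Y Z := by
  simp [eval3, ip_add, map_add]

lemma key {n : ℕ} (e : OrthonormalBasis (Fin n) ℝ V) (T : ExteriorAlgebra ℝ V)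
    (hT : T ∈ pForms V 3) (X : V) :
    ∑ j, ιQ (∑ i, eval3 T X (e j) (e i) • e i) * ιQ (e j)
      = (-2 : ℝ) • exteriorToClifford (interiorProd X T) := by
  set P : ExteriorAlgebra ℝ V → Prop := fun T =>
    ∑ j, ιQ (∑ i, eval3 T X (e j) (e i) • e i) * ιQ (e j)
      = (-2 : ℝ) • exteriorToClifford (interiorProd X T) with hP
  have Padd : ∀ A B : ExteriorAlgebra ℝ V, P A → P B → P (A + B) := by
    intro A B hA hB
    simp only [hP] at hA hB ⊢
    simp only [eval3_add, add_smul, Finset.sum_add_distrib, map_add, add_mul, ip_add, etc_add,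
      smul_add]
    rw [hA, hB]
  show P T
  rw [pForms, pow_succ, pow_succ, pow_one] at hT
  refine Submodule.mul_induction_on hT (fun u hu z hz => ?_) (fun s t hs ht => ?_)
  · obtain ⟨c, rfl⟩ := hz
    refine Submodule.mul_induction_on hu (fun x hx y hy => ?_) (fun s t hs ht => ?_)
    · obtain ⟨a, rfl⟩ := hx
      obtain ⟨b, rfl⟩ := hy
      exact key_gen e a b c X
    · rw [add_mul]; exact Padd _ _ hs ht
  · exact Padd _ _ hs ht


/-- Let `T` be a 3-form, `M` a module over `Cl(V)`, `γ ∈ ℝ`, and `Φ ∈ M` satisfying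
`(Y ⌟ T)·Φ = -(3γ/n) Y·Φ` for every `Y`. Then for every `X`:
`∑ⱼ T(X,eⱼ)·(eⱼ ⌟ T)·Φ = -(18γ²/n²) X·Φ`. -/
theorem stmt15 {n : ℕ} (e : OrthonormalBasis (Fin n) ℝ V)
    (T : ExteriorAlgebra ℝ V) (hT : T ∈ pForms V 3)
    (TV : V → V → V) (hTV : ∀ X Y Z : V, ⟪TV X Y, Z⟫ = eval3 T X Y Z)
    (M : Type*) [AddCommGroup M] [Module ℝ M]
    [Module (CliffordAlgebra (negInnerQuadraticForm V)) M]
    [IsScalarTower ℝ (CliffordAlgebra (negInnerQuadraticForm V)) M]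
    (γ : ℝ) (Φ : M)
    (hΦ : ∀ Y : V, exteriorToClifford (interiorProd Y T) • Φ =
      (-(3 * γ / (n : ℝ))) • (CliffordAlgebra.ι (negInnerQuadraticForm V) Y • Φ))
    (X : V) :
    ∑ j : Fin n, (CliffordAlgebra.ι (negInnerQuadraticForm V) (TV X (e j)) *
        exteriorToClifford (interiorProd (e j) T)) • Φ =
      (-(18 * γ ^ 2 / (n : ℝ) ^ 2)) • (CliffordAlgebra.ι (negInnerQuadraticForm V) X • Φ) := by
  set r : ℝ := -(3 * γ / (n : ℝ)) with hr
  have hTV' : ∀ Y : V, TV X Y = ∑ i, eval3 T X Y (e i) • e i := by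
    intro Y
    conv_lhs => rw [← e.sum_repr' (TV X Y)]
    refine Finset.sum_congr rfl fun i _ => ?_
    rw [real_inner_comm, hTV]
  have step1 : ∀ j : Fin n,
      (ιQ (TV X (e j)) * exteriorToClifford (interiorProd (e j) T)) • Φ
        = r • ((ιQ (TV X (e j)) * ιQ (e j)) • Φ) := by
    intro j
    rw [mul_smul, hΦ (e j)]
    calc ιQ (TV X (e j)) • r • (ιQ (e j) • Φ)
        = ιQ (TV X (e j)) • ((r • ιQ (e j)) • Φ) := by rw [smul_assoc]
      _ = (ιQ (TV X (e j)) * (r • ιQ (e j))) • Φ := (mul_smul _ _ _).symm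
      _ = (r • (ιQ (TV X (e j)) * ιQ (e j))) • Φ := by rw [mul_smul_comm]
      _ = r • ((ιQ (TV X (e j)) * ιQ (e j)) • Φ) := smul_assoc _ _ _
  simp only [step1]
  rw [← Finset.smul_sum, ← Finset.sum_smul]
  have hkey : ∑ j, ιQ (TV X (e j)) * ιQ (e j)
      = (-2 : ℝ) • exteriorToClifford (interiorProd X T) := by
    simp only [hTV']
    exact key e T hT X
  rw [hkey, smul_assoc, hΦ X, smul_smul, smul_smul]
  congr 1
  rw [hr]
  ring
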